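/- Let μ_S, μ_T be probability measures on X, f : X → {0,1} a fixed labeling function, and H a set of {0,1}-valued hypotheses. Write L_μ(h) = μ{x : h(x) ≠ f(x)}. Then for every h ∈ H and every h* ∈ H: L_{μ_T}(h) ≤ L_{μ_S}(h) + L_{μ_S}(h*) + L_{μ_T}(h*) + (1/2)·d_{H∆H}(μ_S, μ_T), where d_{H∆H}(μ_S, μ_T) = 2·sup_{h₁,h₂∈H} |μ_S{h₁ ≠ h₂} − μ_T{h₁ ≠ h₂}|. In particular, L_{μ_T}(h) ≤ L_{μ_S}(h) + (1/2)·d_{H∆H}(μ_S, μ_T) + λ, with λ = inf_{h'∈H}(L_{μ_S}(h') + L_{μ_T}(h')) replaced by any achieved value L_{μ_S}(h*) + L_{μ_T}(h*). -/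
import Mathlib


open MeasureTheory

/-- Loss of hypothesis h under μ with respect to the labeling function f. -/
noncomputable def lossF {X : Type*} [MeasurableSpace X] (μ : Measure X)
    (f h : X → Bool) : ℝ :=
  (μ {x | h x ≠ f x}).toReal

/-- Real-valued disagreement loss between two hypotheses under μ. -/
noncomputable def disLoss {X : Type*} [MeasurableSpace X] (μ : Measure X)
    (h h' : X → Bool) : ℝ :=
  (μ {x | h x ≠ h' x}).toReal

/-- The H∆H-divergence between two distributions. -/
noncomputable def dHdH {X : Type*} [MeasurableSpace X] (μS μT : Measure X)
    (H : Set (X → Bool)) : ℝ :=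
  2 * sSup {r : ℝ | ∃ h₁ ∈ H, ∃ h₂ ∈ H, r = |disLoss μS h₁ h₂ - disLoss μT h₁ h₂|}

lemma tri_aux {X : Type*} [MeasurableSpace X] (μ : Measure X)
    [IsProbabilityMeasure μ] (a b c : X → Bool) :
    (μ {x | a x ≠ c x}).toReal ≤ (μ {x | a x ≠ b x}).toReal + (μ {x | b x ≠ c x}).toReal := by
  have hsub : {x | a x ≠ c x} ⊆ {x | a x ≠ b x} ∪ {x | b x ≠ c x} := by
    intro x hx
    by_cases hab : a x = b x
    · right; simp only [Set.mem_setOf_eq]; rw [← hab]; exact hx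
    · left; exact hab
  have h1 : μ {x | a x ≠ c x} ≤ μ {x | a x ≠ b x} + μ {x | b x ≠ c x} :=
    le_trans (measure_mono hsub) (measure_union_le _ _)
  have fin : ∀ s : Set X, μ s ≠ ⊤ := fun s => measure_ne_top μ s
  rw [← ENNReal.toReal_add (fin _) (fin _)]
  exact ENNReal.toReal_mono (by simp [fin]) h1

/-- the distribution-shift core of the domain-adaptation bound:
L_{μT}(h) ≤ L_{μS}(h) + L_{μS}(h*) + L_{μT}(h*) + (1/2)·d_{H∆H}(μS, μT)
for every h, h* ∈ H. -/
theorem stmt_13 {X : Type*} [MeasurableSpace X] (μS μT : Measure X)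
    [IsProbabilityMeasure μS] [IsProbabilityMeasure μT]
    (f : X → Bool) (H : Set (X → Bool))
    (h hstar : X → Bool) (hh : h ∈ H) (hhstar : hstar ∈ H) :
    lossF μT f h ≤ lossF μS f h + lossF μS f hstar + lossF μT f hstar
      + (1 / 2) * dHdH μS μT H := by
  set S := {r : ℝ | ∃ h₁ ∈ H, ∃ h₂ ∈ H, r = |disLoss μS h₁ h₂ - disLoss μT h₁ h₂|}
  have hbdd : BddAbove S := by
    refine ⟨2, fun r hr => ?_⟩
    obtain ⟨h₁, _, h₂, _, rfl⟩ := hr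
    have b1 : disLoss μS h₁ h₂ ≤ 1 := by
      unfold disLoss
      have := prob_le_one (μ := μS) (s := {x | h₁ x ≠ h₂ x})
      exact_mod_cast ENNReal.toReal_mono (by norm_num) this |>.trans (by norm_num)
    have b2 : (0:ℝ) ≤ disLoss μT h₁ h₂ := ENNReal.toReal_nonneg
    have b3 : disLoss μT h₁ h₂ ≤ 1 := by
      unfold disLoss
      have := prob_le_one (μ := μT) (s := {x | h₁ x ≠ h₂ x})
      exact_mod_cast ENNReal.toReal_mono (by norm_num) this |>.trans (by norm_num)
    have b4 : (0:ℝ) ≤ disLoss μS h₁ h₂ := ENNReal.toReal_nonneg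
    rw [abs_le]; constructor <;> nlinarith
  have hmem : |disLoss μS h hstar - disLoss μT h hstar| ∈ S :=
    ⟨h, hh, hstar, hhstar, rfl⟩
  have hsup : |disLoss μS h hstar - disLoss μT h hstar| ≤ sSup S := le_csSup hbdd hmem
  have t1 : lossF μT f h ≤ disLoss μT h hstar + lossF μT f hstar := by
    unfold lossF disLoss
    exact tri_aux μT h hstar f
  have t2 : disLoss μS h hstar ≤ lossF μS f h + lossF μS f hstar := by
    unfold lossF disLoss
    have := tri_aux μS h f hstar
    have hswap : {x | f x ≠ hstar x} = {x | hstar x ≠ f x} := by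
      ext x; exact ne_comm
    rw [hswap] at this
    exact this
  have t3 : disLoss μT h hstar ≤ disLoss μS h hstar + sSup S := by
    have : disLoss μT h hstar - disLoss μS h hstar ≤ |disLoss μS h hstar - disLoss μT h hstar| := by
      rw [abs_sub_comm]; exact le_abs_self _
    linarith [hsup]
  have hd : (1/2) * dHdH μS μT H = sSup S := by
    unfold dHdH; ring
  rw [hd]
  linarith
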